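/- Let π : A → B be a morphism of unital bialgebras with divisions and let 0 : B → A be a section of π. Then F(A) = { Σ u₍₁₎/0(π(u₍₂₎)) : u ∈ A } = { Σ 0(π(u₍₁₎))\u₍₂₎ : u ∈ A } (Sweedler notation for the comultiplication of A). -/

import Mathlib

open TensorProduct

namespace FormalLoops

variable (k : Type*) [Field k]

/-- A unital, not necessarily associative, bialgebra with left and right divisions:
a cocommutative coassociative counital coalgebra together with a bilinear unital
multiplication and bilinear left/right divisions which are coalgebra morphisms and
satisfy the division cancellation laws (in Sweedler form). -/
structure DivBialg (A : Type*) [AddCommGroup A] [Module k A] where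
  Δ : A →ₗ[k] A ⊗[k] A
  ε : A →ₗ[k] k
  mul : A →ₗ[k] A →ₗ[k] A
  one : A
  ld : A →ₗ[k] A →ₗ[k] A
  rd : A →ₗ[k] A →ₗ[k] A
  coassoc : ∀ u : A, (TensorProduct.assoc k A A A) ((Δ.rTensor A) (Δ u)) = (Δ.lTensor A) (Δ u)
  counit_left : ∀ u : A, (TensorProduct.lid k A) ((ε.rTensor A) (Δ u)) = u
  counit_right : ∀ u : A, (TensorProduct.rid k A) ((ε.lTensor A) (Δ u)) = u
  cocomm : ∀ u : A, (TensorProduct.comm k A A) (Δ u) = Δ u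
  Δ_one : Δ one = one ⊗ₜ[k] one
  ε_one : ε one = 1
  one_mul : ∀ u, mul one u = u
  mul_one : ∀ u, mul u one = u
  Δ_mul : ∀ u v, Δ (mul u v) = TensorProduct.map₂ mul mul (Δ u) (Δ v)
  ε_mul : ∀ u v, ε (mul u v) = ε u * ε v
  Δ_ld : ∀ u v, Δ (ld u v) = TensorProduct.map₂ ld ld (Δ u) (Δ v)
  ε_ld : ∀ u v, ε (ld u v) = ε u * ε v
  Δ_rd : ∀ u v, Δ (rd u v) = TensorProduct.map₂ rd rd (Δ u) (Δ v)
  ε_rd : ∀ u v, ε (rd u v) = ε u * ε v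
  /-- Σ u₍₁₎\(u₍₂₎v) = ε(u)v -/
  ld_mul_cancel : ∀ u v, TensorProduct.lift ld ((LinearMap.lTensor A (mul.flip v)) (Δ u)) = ε u • v
  /-- Σ u₍₁₎(u₍₂₎\v) = ε(u)v -/
  mul_ld_cancel : ∀ u v, TensorProduct.lift mul ((LinearMap.lTensor A (ld.flip v)) (Δ u)) = ε u • v
  /-- Σ (vu₍₁₎)/u₍₂₎ = ε(u)v -/
  rd_mul_cancel : ∀ u v, TensorProduct.lift rd ((LinearMap.rTensor A (mul v)) (Δ u)) = ε u • v
  /-- Σ (v/u₍₁₎)u₍₂₎ = ε(u)v -/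
  mul_rd_cancel : ∀ u v, TensorProduct.lift mul ((LinearMap.rTensor A (rd v)) (Δ u)) = ε u • v

variable {A B : Type*} [AddCommGroup A] [Module k A] [AddCommGroup B] [Module k B]

/-- A morphism of unital bialgebras with divisions. -/
structure DivBialgHom (SA : DivBialg k A) (SB : DivBialg k B) (π : A →ₗ[k] B) : Prop where
  map_Δ : ∀ u, TensorProduct.map π π (SA.Δ u) = SB.Δ (π u)
  map_ε : ∀ u, SB.ε (π u) = SA.ε u
  map_mul : ∀ u v, π (SA.mul u v) = SB.mul (π u) (π v)
  map_one : π SA.one = SB.one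
  map_ld : ∀ u v, π (SA.ld u v) = SB.ld (π u) (π v)
  map_rd : ∀ u v, π (SA.rd u v) = SB.rd (π u) (π v)

/-- `D` is a subcoalgebra w.r.t. the comultiplication `Δ`: `Δ(D) ⊆ D ⊗ D`. -/
def IsSubcoalg {M : Type*} [AddCommGroup M] [Module k M] (Δ : M →ₗ[k] M ⊗[k] M)
    (D : Submodule k M) : Prop :=
  ∀ x ∈ D, Δ x ∈ LinearMap.range (TensorProduct.map D.subtype D.subtype)

/-- `F(A)`: the sum of all subcoalgebras `D ⊆ A` on which `π = ε(·) • 1`. -/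
def Fsub (SA : DivBialg k A) (oneB : B) (π : A →ₗ[k] B) : Submodule k A :=
  sSup {D : Submodule k A | IsSubcoalg k SA.Δ D ∧ ∀ x ∈ D, π x = SA.ε x • oneB}

end FormalLoops

namespace FsubAux

open FormalLoops TensorProduct LinearMap

variable {k : Type*} [Field k]
variable {A B : Type*} [AddCommGroup A] [Module k A] [AddCommGroup B] [Module k B]

/-- In a cocommutative coassociative coalgebra, swapping the two middle factors of
the fourfold comultiplication `(Δ ⊗ Δ) ∘ Δ` leaves it unchanged. -/
lemma swap23 (S : DivBialg k A) (u : A) :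
    (tensorTensorTensorComm k A A A A) (map S.Δ S.Δ (S.Δ u))
      = map S.Δ S.Δ (S.Δ u) := by
  set c := S.Δ with hc
  set c₃ : A →ₗ[k] (A ⊗[k] A) ⊗[k] A := (c.rTensor A) ∘ₗ c with hc₃
  have hcoassoc : ∀ v : A, (TensorProduct.assoc k A A A) (c₃ v) = (c.lTensor A) (c v) := by
    intro v; simpa [hc₃] using S.coassoc v
  have hc₃symm : ∀ v : A,
      c₃ v = (TensorProduct.assoc k A A A).symm ((c.lTensor A) (c v)) := by
    intro v; rw [← hcoassoc]; simp
  have hcommc : (TensorProduct.comm k A A).toLinearMap ∘ₗ c = c := LinearMap.ext S.cocomm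
  set τ : (A ⊗[k] A) ⊗[k] A →ₗ[k] (A ⊗[k] A) ⊗[k] A :=
    (TensorProduct.assoc k A A A).symm.toLinearMap
      ∘ₗ ((TensorProduct.comm k A A).toLinearMap.lTensor A)
      ∘ₗ (TensorProduct.assoc k A A A).toLinearMap with hτ
  have hτc₃ : ∀ v, τ (c₃ v) = c₃ v := by
    intro v
    have h1 : ((TensorProduct.comm k A A).toLinearMap.lTensor A) ((c.lTensor A) (c v))
        = (c.lTensor A) (c v) := by
      rw [← LinearMap.comp_apply, ← LinearMap.lTensor_comp, hcommc]
    rw [hτ]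
    simp only [LinearMap.comp_apply, LinearEquiv.coe_coe, hcoassoc, h1, ← hc₃symm]
  have hstr1 : (TensorProduct.assoc k (A ⊗[k] A) A A).toLinearMap ∘ₗ ((c.rTensor A).rTensor A)
      = (c.rTensor (A ⊗[k] A)) ∘ₗ (TensorProduct.assoc k A A A).toLinearMap := by
    ext x y z; simp
  have hstr2 : (tensorTensorTensorComm k A A A A).toLinearMap
        ∘ₗ (TensorProduct.assoc k (A ⊗[k] A) A A).toLinearMap
      = (TensorProduct.assoc k (A ⊗[k] A) A A).toLinearMap ∘ₗ (τ.rTensor A) := by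
    ext x y z w; simp [hτ]
  have hT : map c c (c u)
      = (TensorProduct.assoc k (A ⊗[k] A) A A) ((c₃.rTensor A) (c u)) := by
    have e1 : map c c = (c.rTensor (A ⊗[k] A)) ∘ₗ (c.lTensor A) :=
      (rTensor_comp_lTensor _ _ _).symm
    have e2 : (c₃.rTensor A) (c u) = ((c.rTensor A).rTensor A) (c₃ u) := by
      rw [hc₃, rTensor_comp]; rfl
    calc map c c (c u) = (c.rTensor (A ⊗[k] A)) ((c.lTensor A) (c u)) := by
          rw [e1]; rfl
      _ = (c.rTensor (A ⊗[k] A)) ((TensorProduct.assoc k A A A) (c₃ u)) := by rw [hcoassoc]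
      _ = (TensorProduct.assoc k (A ⊗[k] A) A A) (((c.rTensor A).rTensor A) (c₃ u)) := by
          have := LinearMap.congr_fun hstr1 (c₃ u)
          simp only [LinearMap.comp_apply, LinearEquiv.coe_coe] at this
          rw [this]
      _ = (TensorProduct.assoc k (A ⊗[k] A) A A) ((c₃.rTensor A) (c u)) := by rw [e2]
  rw [hT]
  have h2 := LinearMap.congr_fun hstr2 ((c₃.rTensor A) (c u))
  simp only [LinearMap.comp_apply, LinearEquiv.coe_coe] at h2
  rw [h2]
  congr 1
  rw [← LinearMap.comp_apply, ← LinearMap.rTensor_comp]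
  have : τ ∘ₗ c₃ = c₃ := LinearMap.ext hτc₃
  rw [this]

/-- The comultiplication applied to a lifted division, in terms of the middle-swap map. -/
lemma delta_lift (S : DivBialg k A) (d : A →ₗ[k] A →ₗ[k] A)
    (hd : ∀ a b, S.Δ (d a b) = map₂ d d (S.Δ a) (S.Δ b)) (x : A ⊗[k] A) :
    S.Δ (lift d x)
      = map (lift d) (lift d) ((tensorTensorTensorComm k A A A A) (map S.Δ S.Δ x)) := by
  have hpure : ∀ p q : A ⊗[k] A,
      map (lift d) (lift d) ((tensorTensorTensorComm k A A A A) (p ⊗ₜ[k] q))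
        = map₂ d d p q := by
    intro p q
    induction p using TensorProduct.induction_on with
    | zero => simp
    | tmul a b =>
      induction q using TensorProduct.induction_on with
      | zero => simp
      | tmul x' y' => simp
      | add q1 q2 h1 h2 => simp only [tmul_add, map_add, h1, h2]
    | add p1 p2 h1 h2 => simp only [add_tmul, map_add, h1, h2, LinearMap.add_apply]
  have hmap : S.Δ ∘ₗ lift d
      = map (lift d) (lift d) ∘ₗ (tensorTensorTensorComm k A A A A).toLinearMap
          ∘ₗ map S.Δ S.Δ := by
    ext a b
    simp only [AlgebraTensorModule.curry_apply, curry_apply, LinearMap.coe_restrictScalars,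
      LinearMap.comp_apply, lift.tmul, map_tmul, LinearEquiv.coe_coe]
    rw [hd a b, hpure]
  exact LinearMap.congr_fun hmap x

/-- `Δ(Σ u₁ / w(u₂)) = Σ (u₁ / w(u₃)) ⊗ (u₂ / w(u₄))` for a coalgebra endomorphism `w`. -/
lemma delta_R (S : DivBialg k A) (d : A →ₗ[k] A →ₗ[k] A)
    (hd : ∀ a b, S.Δ (d a b) = map₂ d d (S.Δ a) (S.Δ b))
    (w : A →ₗ[k] A) (hw : ∀ b, S.Δ (w b) = map w w (S.Δ b)) (u : A) :
    S.Δ (lift d ((w.lTensor A) (S.Δ u)))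
      = map (lift d ∘ₗ w.lTensor A ∘ₗ S.Δ) (lift d ∘ₗ w.lTensor A ∘ₗ S.Δ) (S.Δ u) := by
  set c := S.Δ with hc
  have hb : map c c ((w.lTensor A) (c u)) = ((map w w).lTensor (A ⊗[k] A)) (map c c (c u)) := by
    have hmap : map c c ∘ₗ w.lTensor A = (map w w).lTensor (A ⊗[k] A) ∘ₗ map c c := by
      ext a b
      simp only [AlgebraTensorModule.curry_apply, curry_apply, LinearMap.coe_restrictScalars,
        LinearMap.comp_apply, lTensor_tmul, map_tmul]
      rw [hw b]
    exact LinearMap.congr_fun hmap (c u)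
  have hcstr : (tensorTensorTensorComm k A A A A).toLinearMap ∘ₗ ((map w w).lTensor (A ⊗[k] A))
      = map (w.lTensor A) (w.lTensor A) ∘ₗ (tensorTensorTensorComm k A A A A).toLinearMap := by
    ext a b x y; simp
  rw [delta_lift S d hd, hb]
  have h3 := LinearMap.congr_fun hcstr (map c c (c u))
  simp only [LinearMap.comp_apply, LinearEquiv.coe_coe] at h3
  rw [h3, swap23 S u]
  simp only [map_comp, LinearMap.comp_apply]
  rfl

/-- `Δ(Σ w(u₁) \ u₂) = Σ (w(u₁) \ u₃) ⊗ (w(u₂) \ u₄)` for a coalgebra endomorphism `w`. -/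
lemma delta_L (S : DivBialg k A) (d : A →ₗ[k] A →ₗ[k] A)
    (hd : ∀ a b, S.Δ (d a b) = map₂ d d (S.Δ a) (S.Δ b))
    (w : A →ₗ[k] A) (hw : ∀ b, S.Δ (w b) = map w w (S.Δ b)) (u : A) :
    S.Δ (lift d ((w.rTensor A) (S.Δ u)))
      = map (lift d ∘ₗ w.rTensor A ∘ₗ S.Δ) (lift d ∘ₗ w.rTensor A ∘ₗ S.Δ) (S.Δ u) := by
  set c := S.Δ with hc
  have hb : map c c ((w.rTensor A) (c u)) = ((map w w).rTensor (A ⊗[k] A)) (map c c (c u)) := by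
    have hmap : map c c ∘ₗ w.rTensor A = (map w w).rTensor (A ⊗[k] A) ∘ₗ map c c := by
      ext a b
      simp only [AlgebraTensorModule.curry_apply, curry_apply, LinearMap.coe_restrictScalars,
        LinearMap.comp_apply, rTensor_tmul, map_tmul]
      rw [hw a]
    exact LinearMap.congr_fun hmap (c u)
  have hcstr : (tensorTensorTensorComm k A A A A).toLinearMap ∘ₗ ((map w w).rTensor (A ⊗[k] A))
      = map (w.rTensor A) (w.rTensor A) ∘ₗ (tensorTensorTensorComm k A A A A).toLinearMap := by
    ext a b x y; simp
  rw [delta_lift S d hd, hb]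
  have h3 := LinearMap.congr_fun hcstr (map c c (c u))
  simp only [LinearMap.comp_apply, LinearEquiv.coe_coe] at h3
  rw [h3, swap23 S u]
  simp only [map_comp, LinearMap.comp_apply]
  rfl

lemma rd_one (S : DivBialg k A) (v : A) : S.rd v S.one = v := by
  have h := S.rd_mul_cancel S.one v
  rw [S.Δ_one] at h
  simpa [S.ε_one, S.mul_one] using h

lemma ld_one (S : DivBialg k A) (v : A) : S.ld S.one v = v := by
  have h := S.ld_mul_cancel S.one v
  rw [S.Δ_one] at h
  simpa [S.ε_one, S.one_mul] using h

lemma lift_rd_delta (S : DivBialg k A) (v : A) :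
    lift S.rd (S.Δ v) = S.ε v • S.one := by
  have h := S.rd_mul_cancel v S.one
  have hm : S.mul S.one = LinearMap.id := LinearMap.ext S.one_mul
  rwa [hm, LinearMap.rTensor_id, LinearMap.id_apply] at h

lemma lift_ld_delta (S : DivBialg k A) (v : A) :
    lift S.ld (S.Δ v) = S.ε v • S.one := by
  have h := S.ld_mul_cancel v S.one
  have hm : S.mul.flip S.one = LinearMap.id := LinearMap.ext S.mul_one
  rwa [hm, LinearMap.lTensor_id, LinearMap.id_apply] at h

end FsubAux

open FsubAux LinearMap in
open FormalLoops in
/-- If `π : A → B` is a morphism of unital bialgebras with divisions and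
`0 = z : B → A` is a section of `π`, then
`F(A) = { Σ u₍₁₎/z(π(u₍₂₎)) | u ∈ A } = { Σ z(π(u₍₁₎))\u₍₂₎ | u ∈ A }`. -/
theorem fsub_eq_range_div
    (k : Type*) [Field k] [CharZero k]
    {A B : Type*} [AddCommGroup A] [Module k A] [AddCommGroup B] [Module k B]
    (SA : DivBialg k A) (SB : DivBialg k B)
    (π : A →ₗ[k] B) (z : B →ₗ[k] A)
    (hπ : DivBialgHom k SA SB π) (hz : DivBialgHom k SB SA z)
    (hsec : π ∘ₗ z = LinearMap.id) :
    (((Fsub k SA SB.one π : Submodule k A) : Set A)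
        = Set.range (fun u : A =>
            TensorProduct.lift SA.rd ((LinearMap.lTensor A (z ∘ₗ π)) (SA.Δ u)))) ∧
    (((Fsub k SA SB.one π : Submodule k A) : Set A)
        = Set.range (fun u : A =>
            TensorProduct.lift SA.ld ((LinearMap.rTensor A (z ∘ₗ π)) (SA.Δ u)))) := by
  classical
  set w : A →ₗ[k] A := z ∘ₗ π with hwdef
  -- w is a coalgebra endomorphism
  have hw : ∀ b, SA.Δ (w b) = TensorProduct.map w w (SA.Δ b) := by
    intro b
    have h2 := hz.map_Δ (π b)
    rw [← hπ.map_Δ b] at h2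
    calc SA.Δ (w b) = TensorProduct.map z z (TensorProduct.map π π (SA.Δ b)) := h2.symm
      _ = TensorProduct.map w w (SA.Δ b) := by
          rw [hwdef, TensorProduct.map_comp]; rfl
  have hπz : ∀ x : B, π (z x) = x := fun x => LinearMap.congr_fun hsec x
  have hπw : ∀ a : A, π (w a) = π a := fun a => hπz (π a)
  have hεw : ∀ a : A, SA.ε (w a) = SA.ε a := fun a => (hz.map_ε (π a)).trans (hπ.map_ε a)
  have hzone : z SB.one = SA.one := hz.map_one
  -- The two linear maps
  set R : A →ₗ[k] A := TensorProduct.lift SA.rd ∘ₗ w.lTensor A ∘ₗ SA.Δ with hRdef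
  set L : A →ₗ[k] A := TensorProduct.lift SA.ld ∘ₗ w.rTensor A ∘ₗ SA.Δ with hLdef
  have hRapp : ∀ u : A, R u = TensorProduct.lift SA.rd ((w.lTensor A) (SA.Δ u)) := fun _ => rfl
  have hLapp : ∀ u : A, L u = TensorProduct.lift SA.ld ((w.rTensor A) (SA.Δ u)) := fun _ => rfl
  -- π ∘ R and π ∘ L
  have hπliftR : ∀ x : A ⊗[k] A, π (TensorProduct.lift SA.rd x)
      = TensorProduct.lift SB.rd (TensorProduct.map π π x) := by
    intro x
    have : π ∘ₗ TensorProduct.lift SA.rd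
        = TensorProduct.lift SB.rd ∘ₗ TensorProduct.map π π := by
      ext a b; simp [hπ.map_rd]
    exact LinearMap.congr_fun this x
  have hπliftL : ∀ x : A ⊗[k] A, π (TensorProduct.lift SA.ld x)
      = TensorProduct.lift SB.ld (TensorProduct.map π π x) := by
    intro x
    have : π ∘ₗ TensorProduct.lift SA.ld
        = TensorProduct.lift SB.ld ∘ₗ TensorProduct.map π π := by
      ext a b; simp [hπ.map_ld]
    exact LinearMap.congr_fun this x
  have hππlT : ∀ x : A ⊗[k] A, TensorProduct.map π π ((w.lTensor A) x)
      = TensorProduct.map π π x := by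
    intro x
    have : TensorProduct.map π π ∘ₗ w.lTensor A = TensorProduct.map π π := by
      ext a b; simp [hπw b]
    exact LinearMap.congr_fun this x
  have hππrT : ∀ x : A ⊗[k] A, TensorProduct.map π π ((w.rTensor A) x)
      = TensorProduct.map π π x := by
    intro x
    have : TensorProduct.map π π ∘ₗ w.rTensor A = TensorProduct.map π π := by
      ext a b; simp [hπw a]
    exact LinearMap.congr_fun this x
  have hπR : ∀ u : A, π (R u) = SA.ε u • SB.one := by
    intro u
    rw [hRapp, hπliftR, hππlT, hπ.map_Δ, lift_rd_delta SB (π u), hπ.map_ε]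
  have hπL : ∀ u : A, π (L u) = SA.ε u • SB.one := by
    intro u
    rw [hLapp, hπliftL, hππrT, hπ.map_Δ, lift_ld_delta SB (π u), hπ.map_ε]
  -- ε ∘ R and ε ∘ L
  have hεR : ∀ u : A, SA.ε (R u) = SA.ε u := by
    intro u
    have hmap : SA.ε ∘ₗ TensorProduct.lift SA.rd ∘ₗ w.lTensor A
        = SA.ε ∘ₗ (TensorProduct.rid k A).toLinearMap ∘ₗ SA.ε.lTensor A := by
      ext a b
      simp [SA.ε_rd, hεw b, TensorProduct.rid_tmul, mul_comm]
    have := LinearMap.congr_fun hmap (SA.Δ u)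
    simp only [LinearMap.comp_apply, LinearEquiv.coe_coe] at this
    rw [hRapp, this, SA.counit_right u]
  have hεL : ∀ u : A, SA.ε (L u) = SA.ε u := by
    intro u
    have hmap : SA.ε ∘ₗ TensorProduct.lift SA.ld ∘ₗ w.rTensor A
        = SA.ε ∘ₗ (TensorProduct.lid k A).toLinearMap ∘ₗ SA.ε.rTensor A := by
      ext a b
      simp [SA.ε_ld, hεw a, TensorProduct.lid_tmul]
    have := LinearMap.congr_fun hmap (SA.Δ u)
    simp only [LinearMap.comp_apply, LinearEquiv.coe_coe] at this
    rw [hLapp, this, SA.counit_left u]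
  -- Δ ∘ R and Δ ∘ L
  have hΔR : ∀ u : A, SA.Δ (R u) = TensorProduct.map R R (SA.Δ u) := by
    intro u
    rw [hRapp]
    exact delta_R SA SA.rd SA.Δ_rd w hw u
  have hΔL : ∀ u : A, SA.Δ (L u) = TensorProduct.map L L (SA.Δ u) := by
    intro u
    rw [hLapp]
    exact delta_L SA SA.ld SA.Δ_ld w hw u
  -- range R and range L are admissible subcoalgebras
  have hmem : ∀ (T : A →ₗ[k] A), (∀ u, SA.Δ (T u) = TensorProduct.map T T (SA.Δ u)) →
      (∀ u, π (T u) = SA.ε u • SB.one) → (∀ u, SA.ε (T u) = SA.ε u) →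
      LinearMap.range T ∈
        {D : Submodule k A | IsSubcoalg k SA.Δ D ∧ ∀ x ∈ D, π x = SA.ε x • SB.one} := by
    intro T hΔT hπT hεT
    constructor
    · rintro x ⟨u, rfl⟩
      refine ⟨TensorProduct.map T.rangeRestrict T.rangeRestrict (SA.Δ u), ?_⟩
      rw [hΔT u, ← LinearMap.comp_apply, ← TensorProduct.map_comp]
      congr 1
    · rintro x ⟨u, rfl⟩
      rw [hπT u, hεT u]
  have hmemR := hmem R hΔR hπR hεR
  have hmemL := hmem L hΔL hπL hεL
  -- Fsub is contained in the ranges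
  have hleR : Fsub k SA SB.one π ≤ LinearMap.range R := by
    apply sSup_le
    rintro D ⟨hD1, hD2⟩ x hx
    obtain ⟨y, hy⟩ := hD1 x hx
    refine ⟨x, ?_⟩
    have hmap : TensorProduct.lift SA.rd ∘ₗ w.lTensor A ∘ₗ TensorProduct.map D.subtype D.subtype
        = (TensorProduct.rid k A).toLinearMap ∘ₗ SA.ε.lTensor A
            ∘ₗ TensorProduct.map D.subtype D.subtype := by
      ext d₁ d₂
      have h2 : π (D.subtype d₂) = SA.ε (D.subtype d₂) • SB.one := hD2 _ d₂.2
      simp only [AlgebraTensorModule.curry_apply, TensorProduct.curry_apply,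
        LinearMap.coe_restrictScalars, LinearMap.comp_apply, TensorProduct.map_tmul,
        lTensor_tmul, TensorProduct.lift.tmul, LinearEquiv.coe_coe,
        TensorProduct.rid_tmul, hwdef]
      rw [h2, map_smul, hzone, map_smul, rd_one SA]
    have := LinearMap.congr_fun hmap y
    simp only [LinearMap.comp_apply, LinearEquiv.coe_coe] at this
    rw [hRapp, ← hy, this, hy, SA.counit_right x]
  have hleL : Fsub k SA SB.one π ≤ LinearMap.range L := by
    apply sSup_le
    rintro D ⟨hD1, hD2⟩ x hx
    obtain ⟨y, hy⟩ := hD1 x hx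
    refine ⟨x, ?_⟩
    have hmap : TensorProduct.lift SA.ld ∘ₗ w.rTensor A ∘ₗ TensorProduct.map D.subtype D.subtype
        = (TensorProduct.lid k A).toLinearMap ∘ₗ SA.ε.rTensor A
            ∘ₗ TensorProduct.map D.subtype D.subtype := by
      ext d₁ d₂
      have h1 : π (D.subtype d₁) = SA.ε (D.subtype d₁) • SB.one := hD2 _ d₁.2
      simp only [AlgebraTensorModule.curry_apply, TensorProduct.curry_apply,
        LinearMap.coe_restrictScalars, LinearMap.comp_apply, TensorProduct.map_tmul,
        rTensor_tmul, TensorProduct.lift.tmul, LinearEquiv.coe_coe,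
        TensorProduct.lid_tmul, hwdef]
      rw [h1, map_smul, hzone, map_smul SA.ld, LinearMap.smul_apply, ld_one SA]
    have := LinearMap.congr_fun hmap y
    simp only [LinearMap.comp_apply, LinearEquiv.coe_coe] at this
    rw [hLapp, ← hy, this, hy, SA.counit_left x]
  have hFR : Fsub k SA SB.one π = LinearMap.range R := le_antisymm hleR (le_sSup hmemR)
  have hFL : Fsub k SA SB.one π = LinearMap.range L := le_antisymm hleL (le_sSup hmemL)
  constructor
  · rw [hFR, LinearMap.coe_range]
    rfl
  · rw [hFL, LinearMap.coe_range]
    rfl
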